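/- Let m ≥ 3. Fisher's third k-statistic k₃ = (m²/((m−1)(m−2))) · (1/m)∑ⱼ (Xⱼ − X̄)³ is an unbiased estimator of the third cumulant of a single variable: 𝔼[k₃] = 𝔼[X³] − 3𝔼[X²]𝔼[X] + 2𝔼[X]³. -/

import Mathlib

open MeasureTheory ProbabilityTheory
open scoped ENNReal

theorem unbiased_k3 {Ω : Type*} [MeasurableSpace Ω] (μ : Measure Ω) [IsProbabilityMeasure μ]
    (m : ℕ) (hm : 3 ≤ m)
    (X : Fin m → Ω → ℝ)
    (hXmeas : ∀ i, Measurable (X i))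
    (hindep : iIndepFun X μ)
    (hident : ∀ i, IdentDistrib (X i) (X ⟨0, by omega⟩) μ μ)
    (hX : MemLp (X ⟨0, by omega⟩) 3 μ) :
    (∫ ω, ((m:ℝ)^2 / (((m:ℝ)-1) * ((m:ℝ)-2))) * ((m:ℝ)⁻¹ * ∑ j, (X j ω - ((m:ℝ)⁻¹ * ∑ i, X i ω))^3) ∂μ) =
      (∫ ω, X ⟨0, by omega⟩ ω^3 ∂μ) - 3 * (∫ ω, X ⟨0, by omega⟩ ω^2 ∂μ) * (∫ ω, X ⟨0, by omega⟩ ω ∂μ) + 2 * (∫ ω, X ⟨0, by omega⟩ ω ∂μ)^3 := by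
  have hm3 : (3:ℝ) ≤ (m:ℝ) := by exact_mod_cast hm
  have hm0 : (m:ℝ) ≠ 0 := by linarith
  have hm1 : (m:ℝ) - 1 ≠ 0 := by linarith
  have hm2 : (m:ℝ) - 2 ≠ 0 := by linarith
  set i0 : Fin m := ⟨0, by omega⟩ with hi0def
  -- abbreviations for moments
  set a : ℝ := ∫ ω, X i0 ω ∂μ with ha
  set b : ℝ := ∫ ω, (X i0 ω)^2 ∂μ with hb
  set c : ℝ := ∫ ω, (X i0 ω)^3 ∂μ with hc
  -- all variables are in L³
  have hXp : ∀ i, MemLp (X i) 3 μ := fun i => (hident i).symm.memLp_snd hX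
  have haesm : ∀ i, AEStronglyMeasurable (X i) μ := fun i => (hXmeas i).aestronglyMeasurable
  -- ENNReal exponent arithmetic
  have harith1 : (1:ℝ≥0∞)/(3/2) = 1/3 + 1/3 := by
    have h1 : (1:ℝ≥0∞)/(3/2) = 2/3 := by
      rw [one_div, ENNReal.inv_div (Or.inl (by norm_num)) (Or.inl (by norm_num))]
    rw [h1, ENNReal.div_add_div_same, show (1:ℝ≥0∞)+1 = 2 by norm_num]
  have harith2 : (1:ℝ≥0∞) = 1/(3/2) + 1/3 := by
    have h1 : (1:ℝ≥0∞)/(3/2) = 2/3 := by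
      rw [one_div, ENNReal.inv_div (Or.inl (by norm_num)) (Or.inl (by norm_num))]
    rw [h1, ENNReal.div_add_div_same, show (2:ℝ≥0∞)+1 = 3 by norm_num,
      ENNReal.div_self (by norm_num) (by norm_num)]
  -- integrability of all cubic monomials
  have hint3 : ∀ i j k, Integrable (fun ω => X i ω * X j ω * X k ω) μ := by
    intro i j k
    have h1 : MemLp (fun ω => X i ω * X j ω) (3/2) μ :=
      ((hXp j).smul (r := 3/2) (hXp i) (hpqr := ⟨by simpa only [one_div] using harith1.symm⟩)).ae_eq
        (Filter.Eventually.of_forall fun ω => rfl)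
    have h2 := (hXp k).smul (r := 1) h1 (hpqr := ⟨by simpa only [one_div, inv_one] using harith2.symm⟩)
    exact (memLp_one_iff_integrable.1 h2).congr (Filter.Eventually.of_forall fun ω => rfl)
  -- moments of each variable
  have hEa : ∀ i, ∫ ω, X i ω ∂μ = a := fun i => (hident i).integral_eq
  have hEb : ∀ i, ∫ ω, (X i ω)^2 ∂μ = b := fun i =>
    ((hident i).comp (measurable_id.pow_const 2)).integral_eq
  have hEc : ∀ i, ∫ ω, (X i ω)^3 ∂μ = c := fun i =>
    ((hident i).comp (measurable_id.pow_const 3)).integral_eq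
  -- product formulas
  have hab : ∀ i j, i ≠ j → ∫ ω, X i ω * (X j ω)^2 ∂μ = a * b := by
    intro i j hij
    have hI : IndepFun (X i) (fun ω => (X j ω)^2) μ :=
      (hindep.indepFun hij).comp measurable_id (measurable_id.pow_const 2)
    rw [hI.integral_fun_mul_eq_mul_integral (haesm i) ((hXmeas j).pow_const 2).aestronglyMeasurable,
      hEa i, hEb j]
  have ha3 : ∀ i j k, i ≠ j → i ≠ k → j ≠ k →
      ∫ ω, X i ω * X j ω * X k ω ∂μ = a * a * a := by
    intro i j k hij hik hjk
    have h1 : IndepFun (X i * X j) (X k) μ :=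
      hindep.indepFun_mul_left hXmeas i j k hik hjk
    have h2 : ∫ ω, X i ω * X j ω * X k ω ∂μ = (∫ ω, (X i * X j) ω ∂μ) * ∫ ω, X k ω ∂μ :=
      h1.integral_fun_mul_eq_mul_integral ((hXmeas i).mul (hXmeas j)).aestronglyMeasurable (haesm k)
    rw [h2, show (∫ ω, (X i * X j) ω ∂μ) = (∫ ω, X i ω ∂μ) * ∫ ω, X j ω ∂μ from
      (hindep.indepFun hij).integral_mul_eq_mul_integral (haesm i) (haesm j), hEa, hEa, hEa]
  -- monomial values, all cases
  set P : Fin m → Fin m → Fin m → ℝ := fun i j k => ∫ ω, X i ω * X j ω * X k ω ∂μ with hP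
  have hPiii : ∀ i, P i i i = c := by
    intro i
    show (∫ ω, X i ω * X i ω * X i ω ∂μ) = c
    rw [show (∫ ω, X i ω * X i ω * X i ω ∂μ) = ∫ ω, (X i ω)^3 ∂μ from
      integral_congr_ae (Filter.Eventually.of_forall fun ω => by ring)]
    exact hEc i
  have hPiik : ∀ i k, i ≠ k → P i i k = a * b := by
    intro i k hik
    show (∫ ω, X i ω * X i ω * X k ω ∂μ) = a * b
    rw [show (∫ ω, X i ω * X i ω * X k ω ∂μ) = ∫ ω, X k ω * (X i ω)^2 ∂μ from
      integral_congr_ae (Filter.Eventually.of_forall fun ω => by ring)]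
    exact hab k i hik.symm
  have hPiji : ∀ i j, i ≠ j → P i j i = a * b := by
    intro i j hij
    show (∫ ω, X i ω * X j ω * X i ω ∂μ) = a * b
    rw [show (∫ ω, X i ω * X j ω * X i ω ∂μ) = ∫ ω, X j ω * (X i ω)^2 ∂μ from
      integral_congr_ae (Filter.Eventually.of_forall fun ω => by ring)]
    exact hab j i hij.symm
  have hPijj : ∀ i j, i ≠ j → P i j j = a * b := by
    intro i j hij
    show (∫ ω, X i ω * X j ω * X j ω ∂μ) = a * b
    rw [show (∫ ω, X i ω * X j ω * X j ω ∂μ) = ∫ ω, X i ω * (X j ω)^2 ∂μ from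
      integral_congr_ae (Filter.Eventually.of_forall fun ω => by ring)]
    exact hab i j hij
  -- cardinalities
  have hcard1 : ∀ i : Fin m, ((Finset.univ.erase i).card : ℝ) = (m:ℝ) - 1 := by
    intro i
    rw [Finset.card_erase_of_mem (Finset.mem_univ i), Finset.card_univ, Fintype.card_fin]
    have : (1:ℕ) ≤ m := by omega
    push_cast [Nat.cast_sub this]
    ring
  have hcard2 : ∀ i j : Fin m, i ≠ j →
      ((((Finset.univ.erase i).erase j)).card : ℝ) = (m:ℝ) - 2 := by
    intro i j hij
    rw [Finset.card_erase_of_mem (Finset.mem_erase.2 ⟨hij.symm, Finset.mem_univ j⟩),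
      Finset.card_erase_of_mem (Finset.mem_univ i), Finset.card_univ, Fintype.card_fin]
    rw [show m - 1 - 1 = m - 2 from by omega]
    have : (2:ℕ) ≤ m := by omega
    push_cast [Nat.cast_sub this]
    ring
  -- triple sum
  have hsum3 : ∑ i, ∑ j, ∑ k, P i j k
      = (m:ℝ) * (c + 3*((m:ℝ)-1)*(a*b) + ((m:ℝ)-1)*((m:ℝ)-2)*(a*a*a)) := by
    have hinner : ∀ i, ∑ j, ∑ k, P i j k
        = c + 3*((m:ℝ)-1)*(a*b) + ((m:ℝ)-1)*((m:ℝ)-2)*(a*a*a) := by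
      intro i
      rw [← Finset.add_sum_erase _ _ (Finset.mem_univ i)]
      have h1 : ∑ k, P i i k = c + ((m:ℝ)-1)*(a*b) := by
        rw [← Finset.add_sum_erase _ _ (Finset.mem_univ i), hPiii i,
          Finset.sum_congr rfl (fun k hk => hPiik i k (Finset.ne_of_mem_erase hk).symm),
          Finset.sum_const, nsmul_eq_mul, hcard1 i]
      have h2 : ∀ j ∈ Finset.univ.erase i,
          ∑ k, P i j k = a*b + (a*b + ((m:ℝ)-2)*(a*a*a)) := by
        intro j hj
        have hji : j ≠ i := Finset.ne_of_mem_erase hj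
        rw [← Finset.add_sum_erase _ _ (Finset.mem_univ i), hPiji i j hji.symm,
          ← Finset.add_sum_erase _ _ hj, hPijj i j hji.symm,
          Finset.sum_congr rfl (fun k hk => ha3 i j k hji.symm
            (Finset.ne_of_mem_erase (Finset.mem_of_mem_erase hk)).symm
            (Finset.ne_of_mem_erase hk).symm),
          Finset.sum_const, nsmul_eq_mul, hcard2 i j hji.symm]
      rw [h1, Finset.sum_congr rfl h2, Finset.sum_const, nsmul_eq_mul, hcard1 i]
      ring
    rw [Finset.sum_congr rfl (fun i _ => hinner i), Finset.sum_const, nsmul_eq_mul,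
      Finset.card_univ, Fintype.card_fin]
  -- double sum
  have hsum2 : ∑ i, ∑ j, (∫ ω, X i ω * (X j ω)^2 ∂μ)
      = (m:ℝ) * (c + ((m:ℝ)-1)*(a*b)) := by
    have hinner : ∀ i, ∑ j, (∫ ω, X i ω * (X j ω)^2 ∂μ) = c + ((m:ℝ)-1)*(a*b) := by
      intro i
      rw [← Finset.add_sum_erase _ _ (Finset.mem_univ i)]
      rw [show (∫ ω, X i ω * (X i ω)^2 ∂μ) = ∫ ω, (X i ω)^3 ∂μ from
        integral_congr_ae (Filter.Eventually.of_forall fun ω => by ring), hEc i,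
        Finset.sum_congr rfl (fun j hj => hab i j (Finset.ne_of_mem_erase hj).symm),
        Finset.sum_const, nsmul_eq_mul, hcard1 i]
    rw [Finset.sum_congr rfl (fun i _ => hinner i), Finset.sum_const, nsmul_eq_mul,
      Finset.card_univ, Fintype.card_fin]
  -- simple sum
  have hsum1 : ∑ j, (∫ ω, (X j ω)^3 ∂μ) = (m:ℝ) * c := by
    rw [Finset.sum_congr rfl (fun j _ => hEc j), Finset.sum_const, nsmul_eq_mul,
      Finset.card_univ, Fintype.card_fin]
  -- pointwise expansion of the sum of cubes
  have hpt : ∀ ω, ∑ j, (X j ω - (m:ℝ)⁻¹ * ∑ i, X i ω)^3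
      = (∑ j, (X j ω)^3) - 3*(m:ℝ)⁻¹ * (∑ i, ∑ j, X i ω * (X j ω)^2)
        + 2*(m:ℝ)⁻¹^2 * (∑ i, ∑ j, ∑ k, X i ω * X j ω * X k ω) := by
    intro ω
    have hS2 : (∑ i, X i ω) * (∑ j, (X j ω)^2) = ∑ i, ∑ j, X i ω * (X j ω)^2 :=
      Finset.sum_mul_sum _ _ _ _
    have hS3 : (∑ i, X i ω) * (∑ i, X i ω) * (∑ i, X i ω)
        = ∑ i, ∑ j, ∑ k, X i ω * X j ω * X k ω := by
      rw [Finset.sum_mul_sum]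
      rw [Finset.sum_mul]
      exact Finset.sum_congr rfl fun i _ => by
        rw [Finset.sum_mul]
        exact Finset.sum_congr rfl fun j _ => Finset.mul_sum _ _ _
    have expand : ∀ j, (X j ω - (m:ℝ)⁻¹ * ∑ i, X i ω)^3
        = (X j ω)^3 - 3*(m:ℝ)⁻¹*(∑ i, X i ω)*(X j ω)^2
          + 3*(m:ℝ)⁻¹^2*((∑ i, X i ω)*(∑ i, X i ω))*(X j ω)
          - (m:ℝ)⁻¹^3*((∑ i, X i ω)*(∑ i, X i ω)*(∑ i, X i ω)) := fun j => by ring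
    rw [Finset.sum_congr rfl fun j _ => expand j]
    rw [Finset.sum_sub_distrib, Finset.sum_add_distrib, Finset.sum_sub_distrib,
      ← Finset.mul_sum, ← Finset.mul_sum, Finset.sum_const, nsmul_eq_mul,
      Finset.card_univ, Fintype.card_fin]
    rw [mul_assoc (3*(m:ℝ)⁻¹) _ _, hS2]
    have hmm : ((m:ℝ)) * ((m:ℝ)⁻¹^3*((∑ i, X i ω)*(∑ i, X i ω)*(∑ i, X i ω)))
        = (m:ℝ)⁻¹^2*((∑ i, X i ω)*(∑ i, X i ω)*(∑ i, X i ω)) := by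
      field_simp
    rw [hmm, hS3]
    rw [mul_assoc (3*((m:ℝ))⁻¹^2) _ _, hS3]
    ring
  -- integrability of the aggregate integrands
  have hcube : ∀ j, Integrable (fun ω => (X j ω)^3) μ := fun j =>
    (hint3 j j j).congr (Filter.Eventually.of_forall fun ω => by ring)
  have hsq : ∀ i j, Integrable (fun ω => X i ω * (X j ω)^2) μ := fun i j =>
    (hint3 i j j).congr (Filter.Eventually.of_forall fun ω => by ring)
  have hiF1 : Integrable (fun ω => ∑ j, (X j ω)^3) μ :=
    integrable_finset_sum _ (fun j _ => hcube j)
  have hiF2 : Integrable (fun ω => ∑ i, ∑ j, X i ω * (X j ω)^2) μ :=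
    integrable_finset_sum _ (fun i _ => integrable_finset_sum _ (fun j _ => hsq i j))
  have hiF3 : Integrable (fun ω => ∑ i, ∑ j, ∑ k, X i ω * X j ω * X k ω) μ :=
    integrable_finset_sum _ (fun i _ => integrable_finset_sum _ (fun j _ =>
      integrable_finset_sum _ (fun k _ => hint3 i j k)))
  have hmain : ∫ ω, ∑ j, (X j ω - (m:ℝ)⁻¹ * ∑ i, X i ω)^3 ∂μ
      = (((m:ℝ)-1) * ((m:ℝ)-2) / (m:ℝ)) * (c - 3*(a*b) + 2*a^3) := by
    have hsub : Integrable (fun ω => (∑ j, (X j ω)^3)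
        - 3*(m:ℝ)⁻¹ * (∑ i, ∑ j, X i ω * (X j ω)^2)) μ :=
      (hiF1.sub (hiF2.const_mul (3*(m:ℝ)⁻¹))).congr
        (Filter.Eventually.of_forall fun ω => rfl)
    rw [integral_congr_ae (Filter.Eventually.of_forall hpt)]
    rw [integral_add hsub (hiF3.const_mul (2*(m:ℝ)⁻¹^2)),
      integral_sub hiF1 (hiF2.const_mul (3*(m:ℝ)⁻¹)),
      integral_const_mul, integral_const_mul,
      integral_finset_sum _ (fun j _ => hcube j),
      integral_finset_sum _ (fun i (_ : i ∈ Finset.univ) =>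
        integrable_finset_sum _ (fun j _ => hsq i j)),
      Finset.sum_congr rfl (fun i _ => integral_finset_sum _ (fun j _ => hsq i j)),
      integral_finset_sum _ (fun i (_ : i ∈ Finset.univ) =>
        integrable_finset_sum _ (fun j _ => integrable_finset_sum _ (fun k _ => hint3 i j k))),
      Finset.sum_congr rfl (fun i _ => integral_finset_sum _ (fun j (_ : j ∈ Finset.univ) =>
        integrable_finset_sum _ (fun k _ => hint3 i j k))),
      Finset.sum_congr rfl (fun i _ => Finset.sum_congr rfl (fun j _ =>
        integral_finset_sum _ (fun k _ => hint3 i j k))),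
      hsum1, hsum2]
    rw [show (∑ i, ∑ j, ∑ k, ∫ ω, X i ω * X j ω * X k ω ∂μ) = ∑ i, ∑ j, ∑ k, P i j k from rfl,
      hsum3]
    field_simp
    ring
  have final : ((m:ℝ)^2/(((m:ℝ)-1)*((m:ℝ)-2)))
        * ((m:ℝ)⁻¹ * ((((m:ℝ)-1) * ((m:ℝ)-2) / (m:ℝ)) * (c - 3*(a*b) + 2*a^3)))
      = c - 3*b*a + 2*a^3 := by
    field_simp
  rw [integral_const_mul, integral_const_mul, hmain]
  exact final
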